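/- Let δ > 0 and let a, b, H be continuous on (-1,-1+δ] with b and H⁺ bounded on (-1,-1+δ). Assume that either (i) a(x) > 0 for all x ∈ (-1,-1+δ] and ∫_{x}^{-1+δ} ds/a(s) → +∞ as x → -1⁺, or (ii) a(x) < 0 for all x ∈ (-1,-1+δ] and ∫_{x}^{-1+δ} ds/a(s) → -∞ as x → -1⁺. Suppose g ∈ C¹((-1,-1+δ]) satisfies the Riccati-type equation on (-1,-1+δ). Then g is bounded on (-1,-1+δ). If in addition H(x) tends to a limit (finite or infinite) as x → -1⁺ and b(x) tends to a finite limit as x → -1⁺, then lim_{x→-1⁺} g(x) exists and is finite, and lim_{x→-1⁺} a(x)·g'(x) = 0. -/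
import Mathlib


open Set Filter Topology intervalIntegral

lemma crossX (f f' : ℝ → ℝ) (x2 x1 y : ℝ) (hlt : x2 < x1)
    (hf : ∀ z ∈ Icc x2 x1, HasDerivAt f (f' z) z)
    (h2 : f x2 < y) (h1 : y < f x1) :
    ∃ s ∈ Ioc x2 x1, f s = y ∧ 0 ≤ f' s := by
  have hfc : ContinuousOn f (Icc x2 x1) := fun z hz => (hf z hz).continuousAt.continuousWithinAt
  set S : Set ℝ := {z | z ∈ Icc x2 x1 ∧ y ≤ f z} with hS
  have hSclosed : IsClosed S :=
    IsClosed.isClosed_le isClosed_Icc continuousOn_const hfc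
  have hSne : S.Nonempty := ⟨x1, ⟨le_of_lt hlt, le_rfl⟩, le_of_lt h1⟩
  have hSbdd : BddBelow S := ⟨x2, fun z hz => hz.1.1⟩
  set s := sInf S with hs
  have hsS : s ∈ S := hSclosed.csInf_mem hSne hSbdd
  have hsx2 : x2 ≤ s := hsS.1.1
  have hsx1 : s ≤ x1 := hsS.1.2
  have hslt : x2 < s := by
    rcases eq_or_lt_of_le hsx2 with h | h
    · exact absurd (h ▸ hsS.2) (not_le.2 h2)
    · exact h
  -- every point below s in [x2, x1] has f < y
  have hbelow : ∀ u ∈ Ico x2 s, f u < y := by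
    intro u hu
    by_contra hc
    exact absurd (csInf_le hSbdd ⟨⟨hu.1, le_trans hu.2.le hsx1⟩, not_lt.1 hc⟩) (not_le.2 hu.2)
  -- f s = y
  have hfs : f s = y := by
    rcases eq_or_lt_of_le hsS.2 with h | h
    · exact h.symm
    · exfalso
      have hcont : ContinuousAt f s := (hf s hsS.1).continuousAt
      have hev : ∀ᶠ u in 𝓝 s, y < f u := hcont.eventually (eventually_gt_nhds h)
      have hne : (𝓝[<] s).NeBot := nhdsWithin_Iio_self_neBot' ⟨x2, hslt⟩
      have hev' : ∀ᶠ u in 𝓝[<] s, y < f u := hev.filter_mono nhdsWithin_le_nhds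
      have hmem : Ico x2 s ∈ 𝓝[<] s := by
        apply mem_nhdsWithin.2 ⟨Ioi x2, isOpen_Ioi, hslt, ?_⟩
        intro u hu; exact ⟨le_of_lt hu.1, hu.2⟩
      obtain ⟨u, hu1, hu2⟩ := (hev'.and (eventually_of_mem hmem (fun u hu => hu))).exists
      exact absurd (hbelow u hu2) (not_lt.2 hu1.le)
  refine ⟨s, ⟨hslt, hsx1⟩, hfs, ?_⟩
  -- derivative nonneg from left slopes
  have hd : HasDerivWithinAt f (f' s) (Ioo x2 s) s := (hf s hsS.1).hasDerivWithinAt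
  have hslope := hasDerivWithinAt_iff_tendsto_slope.1 hd
  have hne : (𝓝[Ioo x2 s \ {s}] s).NeBot := by
    rw [diff_singleton_eq_self (by simp)]
    refine mem_closure_iff_nhdsWithin_neBot.1 ?_
    rw [closure_Ioo (ne_of_lt hslt)]
    exact ⟨le_of_lt hslt, le_rfl⟩
  refine ge_of_tendsto hslope ?_
  filter_upwards [self_mem_nhdsWithin] with u hu
  have hu' : u ∈ Ioo x2 s := hu.1
  have h1' : f u < f s := hfs ▸ hbelow u ⟨hu'.1.le, hu'.2⟩
  have heq : slope f s u = (f u - f s) / (u - s) := by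
    rw [slope_def_field]
  rw [heq]
  exact div_nonneg_of_nonpos (by linarith) (by linarith [hu'.2])

lemma crossY (f f' : ℝ → ℝ) (x2 x1 y : ℝ) (hlt : x2 < x1)
    (hf : ∀ z ∈ Icc x2 x1, HasDerivAt f (f' z) z)
    (h2 : y < f x2) (h1 : f x1 < y) :
    ∃ s ∈ Ioc x2 x1, f s = y ∧ f' s ≤ 0 := by
  obtain ⟨s, hs, h1', h2'⟩ := crossX (fun z => -f z) (fun z => -f' z) x2 x1 (-y) hlt
    (fun z hz => (hf z hz).neg) (by simpa using h2) (by simpa using h1)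
  refine ⟨s, hs, ?_, by linarith⟩
  have : -f s = -y := h1'
  linarith

/-- split the integral of `(a)⁻¹` -/
lemma Jsplit (δ x x0 : ℝ) (a : ℝ → ℝ) (ha : ContinuousOn a (Ioc (-1) (-1+δ)))
    (ha0 : ∀ z ∈ Ioc (-1:ℝ) (-1+δ), a z ≠ 0) (hx : -1 < x) (hxx0 : x ≤ x0) (hx0 : x0 ≤ -1+δ) :
    ∫ s in x..x0, (a s)⁻¹ =
      (∫ s in x..(-1+δ), (a s)⁻¹) - ∫ s in x0..(-1+δ), (a s)⁻¹ := by
  have hcont : ContinuousOn (fun s => (a s)⁻¹) (Ioc (-1) (-1+δ)) := ha.inv₀ ha0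
  have hi1 : IntervalIntegrable (fun s => (a s)⁻¹) MeasureTheory.volume x x0 :=
    (hcont.mono (fun z hz => ⟨lt_of_lt_of_le hx hz.1, le_trans hz.2 hx0⟩)).intervalIntegrable_of_Icc hxx0
  have hi2 : IntervalIntegrable (fun s => (a s)⁻¹) MeasureTheory.volume x0 (-1+δ) :=
    (hcont.mono (fun z hz => ⟨lt_of_lt_of_le (lt_of_lt_of_le hx hxx0) hz.1, hz.2⟩)).intervalIntegrable_of_Icc hx0
  rw [eq_sub_iff_add_eq]
  exact integral_add_adjacent_intervals hi1 hi2

lemma hJhelp (δ x0 c : ℝ) (a : ℝ → ℝ) (hx0 : x0 ∈ Ioo (-1:ℝ) (-1+δ))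
    (ha : ContinuousOn a (Ioc (-1) (-1+δ)))
    (ha0 : ∀ z ∈ Ioc (-1:ℝ) (-1+δ), a z ≠ 0)
    (h : Tendsto (fun x => c * ∫ s in x..(-1+δ), (a s)⁻¹) (𝓝[>] (-1)) atTop) :
    Tendsto (fun x => ∫ s in x..x0, c * (a s)⁻¹) (𝓝[>] (-1)) atTop := by
  have hmem : Ioo (-1:ℝ) x0 ∈ 𝓝[>] (-1) := Ioo_mem_nhdsGT_of_mem ⟨le_rfl, hx0.1⟩
  have h2 : Tendsto (fun x => c * (∫ s in x..(-1+δ), (a s)⁻¹) + (- (c * ∫ s in x0..(-1+δ), (a s)⁻¹))) (𝓝[>] (-1)) atTop :=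
    tendsto_atTop_add_const_right _ _ h
  refine h2.congr' ?_
  filter_upwards [hmem] with x hx
  rw [integral_const_mul, Jsplit δ x x0 a ha ha0 hx.1 hx.2.le hx0.2.le]
  ring

lemma helperZ (x0 c B : ℝ) (a u u' : ℝ → ℝ)
    (hJ : Tendsto (fun x => ∫ s in x..x0, c * (a s)⁻¹) (𝓝[>] (-1)) atTop)
    (hx0 : -1 < x0)
    (hu : ∀ z ∈ Icc (-1:ℝ) x0, z ≠ -1 → HasDerivAt u (u' z) z)
    (hu'c : ContinuousOn u' (Ioc (-1) x0))
    (hac : ContinuousOn (fun s => c * (a s)⁻¹) (Ioc (-1:ℝ) x0))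
    (hlow : ∀ z ∈ Ioc (-1:ℝ) x0, c * (a z)⁻¹ ≤ u' z)
    (hB : ∀ z ∈ Ioc (-1:ℝ) x0, |u z| ≤ B) : False := by
  obtain ⟨x, hx1, hx2⟩ := ((hJ.eventually (eventually_ge_atTop (2*B+1))).and
    (Filter.eventually_mem_set.2 (Ioo_mem_nhdsGT_of_mem ⟨le_rfl, hx0⟩))).exists
  have hxx0 : x ≤ x0 := hx2.2.le
  have hIcc : Icc x x0 ⊆ Ioc (-1:ℝ) x0 := fun z hz => ⟨lt_of_lt_of_le hx2.1 hz.1, hz.2⟩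
  have hi2 : IntervalIntegrable u' MeasureTheory.volume x x0 :=
    (hu'c.mono hIcc).intervalIntegrable_of_Icc hxx0
  have hi1 : IntervalIntegrable (fun s => c * (a s)⁻¹) MeasureTheory.volume x x0 :=
    (hac.mono hIcc).intervalIntegrable_of_Icc hxx0
  have hftc : ∫ s in x..x0, u' s = u x0 - u x := by
    apply integral_eq_sub_of_hasDerivAt
    · intro z hz
      rw [uIcc_of_le hxx0] at hz
      exact hu z ⟨(hx2.1.trans_le hz.1).le, hz.2⟩ (ne_of_gt (hx2.1.trans_le hz.1))
    · exact hi2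
  have hmono : ∫ s in x..x0, c * (a s)⁻¹ ≤ ∫ s in x..x0, u' s :=
    integral_mono_on hxx0 hi1 hi2 (fun z hz => hlow z (hIcc hz))
  have hb1 := hB x (hIcc ⟨le_rfl, hxx0⟩)
  have hb2 := hB x0 ⟨hx0, le_rfl⟩
  have := abs_le.1 hb1
  have := abs_le.1 hb2
  linarith [hftc ▸ hmono]

lemma lemA (A G c : ℝ) (hA : 0 < A) (h : c ≤ A * G) : c * A⁻¹ ≤ G := by
  have := mul_le_mul_of_nonneg_right h (inv_nonneg.2 hA.le)
  rwa [mul_comm A G, mul_assoc, mul_inv_cancel₀ (ne_of_gt hA), mul_one] at this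

lemma lemB (A G c : ℝ) (hA : A < 0) (h : A * G ≤ c) : c * A⁻¹ ≤ G := by
  have h2 := mul_le_mul_of_nonpos_right h (inv_nonpos.2 hA.le)
  rwa [mul_comm A G, mul_assoc, mul_inv_cancel₀ (ne_of_lt hA), mul_one] at h2

/-- integral blow-up contradiction: if `a x * g' x` stays away from `0` with the
sign of `k` near `-1`, but `g` is bounded, contradiction. -/
lemma lemW (δ k Mg : ℝ) (a g g' : ℝ → ℝ) (hδ : 0 < δ) (hk : k ≠ 0)
    (ha : ContinuousOn a (Ioc (-1) (-1+δ)))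
    (ha0 : ∀ z ∈ Ioc (-1:ℝ) (-1+δ), a z ≠ 0)
    (haSign :
      ((∀ x ∈ Ioc (-1 : ℝ) (-1 + δ), 0 < a x) ∧
        Tendsto (fun x => ∫ s in x..(-1 + δ), 1 / a s) (𝓝[>] (-1)) atTop) ∨
      ((∀ x ∈ Ioc (-1 : ℝ) (-1 + δ), a x < 0) ∧
        Tendsto (fun x => ∫ s in x..(-1 + δ), 1 / a s) (𝓝[>] (-1)) atBot))
    (hgd : ∀ z ∈ Ioo (-1:ℝ) (-1+δ), HasDerivAt g (g' z) z)
    (hg'c : ContinuousOn g' (Ioc (-1) (-1+δ)))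
    (hMg : ∀ z ∈ Ioo (-1:ℝ) (-1+δ), |g z| ≤ Mg)
    (hev : ∀ᶠ x in 𝓝[>] (-1:ℝ), k^2/2 ≤ a x * g' x * k) : False := by
  obtain ⟨u, hu, husub⟩ := mem_nhdsGT_iff_exists_Ioo_subset.1
    (Filter.eventually_iff.1 (hev.and (Filter.eventually_mem_set.2
      (Ioo_mem_nhdsGT_of_mem ⟨le_rfl, by linarith⟩))))
  set x0 := (-1 + min u (-1+δ))/2 with hx0def
  have hminu : -1 < min u (-1+δ) := lt_min hu (by linarith)
  have hx0a : -1 < x0 := by simp only [hx0def]; linarith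
  have hx0b : x0 < min u (-1+δ) := by simp only [hx0def]; linarith
  have hx0dom : x0 ∈ Ioo (-1:ℝ) (-1+δ) := ⟨hx0a, lt_of_lt_of_le hx0b (min_le_right _ _)⟩
  have hsub : Ioc (-1:ℝ) x0 ⊆ Ioo (-1:ℝ) u := fun z hz =>
    ⟨hz.1, lt_of_le_of_lt hz.2 (lt_of_lt_of_le hx0b (min_le_left _ _))⟩
  have hsubdom : Ioc (-1:ℝ) x0 ⊆ Ioo (-1:ℝ) (-1+δ) := fun z hz =>
    ⟨hz.1, lt_of_le_of_lt hz.2 hx0dom.2⟩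
  have hkey : ∀ z ∈ Ioc (-1:ℝ) x0, k^2/2 ≤ a z * g' z * k := fun z hz => (husub (hsub hz)).1
  have hIoc : Ioc (-1:ℝ) x0 ⊆ Ioc (-1:ℝ) (-1+δ) := fun z hz => ⟨hz.1, hz.2.trans hx0dom.2.le⟩
  have hk2 : 0 < k^2/2 := by positivity
  rcases haSign with ⟨hapos, hJ⟩ | ⟨haneg, hJ⟩
  · simp only [one_div] at hJ
    rcases lt_or_gt_of_ne hk with hkneg | hkpos
    · -- k < 0, a > 0 : use u = -g, c = -k/2 > 0
      apply helperZ x0 (-k/2) Mg a (fun w => -g w) (fun w => -g' w)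
        (hJhelp δ x0 (-k/2) a hx0dom ha ha0 ((hJ.const_mul_atTop (by linarith : (0:ℝ) < -k/2))))
        hx0a
        (fun z hz hz' => (hgd z (hsubdom ⟨lt_of_le_of_ne hz.1 (Ne.symm hz'), hz.2⟩)).neg)
        ((hg'c.mono hIoc).neg)
        (continuousOn_const.mul ((ha.mono hIoc).inv₀ (fun z hz => ha0 z (hIoc hz))))
        ?_ (fun z hz => by rw [abs_neg]; exact hMg z (hsubdom hz))
      intro z hz
      have h1 := hkey z hz
      have hA := hapos z (hIoc hz)
      refine lemA (a z) (-(g' z)) (-k/2) hA ?_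
      nlinarith [h1]
    · -- k > 0, a > 0 : u = g, c = k/2
      apply helperZ x0 (k/2) Mg a g g'
        (hJhelp δ x0 (k/2) a hx0dom ha ha0 ((hJ.const_mul_atTop (by linarith : (0:ℝ) < k/2))))
        hx0a
        (fun z hz hz' => hgd z (hsubdom ⟨lt_of_le_of_ne hz.1 (Ne.symm hz'), hz.2⟩))
        (hg'c.mono hIoc)
        (continuousOn_const.mul ((ha.mono hIoc).inv₀ (fun z hz => ha0 z (hIoc hz))))
        ?_ (fun z hz => hMg z (hsubdom hz))
      intro z hz
      have h1 := hkey z hz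
      have hA := hapos z (hIoc hz)
      refine lemA (a z) (g' z) (k/2) hA ?_
      nlinarith [h1]
  · simp only [one_div] at hJ
    have hJneg : Tendsto (fun x => -∫ s in x..(-1+δ), (a s)⁻¹) (𝓝[>] (-1)) atTop :=
      tendsto_neg_atBot_atTop.comp hJ
    have hJc : ∀ c : ℝ, c < 0 → Tendsto (fun x => c * ∫ s in x..(-1+δ), (a s)⁻¹) (𝓝[>] (-1)) atTop := by
      intro c hc
      have := hJneg.const_mul_atTop (show (0:ℝ) < -c by linarith)
      exact this.congr (fun x => by ring)
    rcases lt_or_gt_of_ne hk with hkneg | hkpos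
    · -- k < 0, a < 0 : u = g, c = k/2 < 0; from a g' ≤ k/2 and a<0, g' ≥ (k/2) a⁻¹
      apply helperZ x0 (k/2) Mg a g g'
        (hJhelp δ x0 (k/2) a hx0dom ha ha0 (hJc (k/2) (by linarith)))
        hx0a
        (fun z hz hz' => hgd z (hsubdom ⟨lt_of_le_of_ne hz.1 (Ne.symm hz'), hz.2⟩))
        (hg'c.mono hIoc)
        (continuousOn_const.mul ((ha.mono hIoc).inv₀ (fun z hz => ha0 z (hIoc hz))))
        ?_ (fun z hz => hMg z (hsubdom hz))
      intro z hz
      have h1 := hkey z hz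
      have hA := haneg z (hIoc hz)
      refine lemB (a z) (g' z) (k/2) hA ?_
      nlinarith [h1]
    · -- k > 0, a < 0 : u = -g, c = -k/2 < 0; a g' ≥ k/2, a<0 ⇒ -g' ≥ (-k/2) a⁻¹
      apply helperZ x0 (-k/2) Mg a (fun w => -g w) (fun w => -g' w)
        (hJhelp δ x0 (-k/2) a hx0dom ha ha0 (hJc (-k/2) (by linarith)))
        hx0a
        (fun z hz hz' => (hgd z (hsubdom ⟨lt_of_le_of_ne hz.1 (Ne.symm hz'), hz.2⟩)).neg)
        ((hg'c.mono hIoc).neg)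
        (continuousOn_const.mul ((ha.mono hIoc).inv₀ (fun z hz => ha0 z (hIoc hz))))
        ?_ (fun z hz => by rw [abs_neg]; exact hMg z (hsubdom hz))
      intro z hz
      have h1 := hkey z hz
      have hA := haneg z (hIoc hz)
      refine lemB (a z) (-(g' z)) (-k/2) hA ?_
      nlinarith [h1]

set_option maxHeartbeats 2000000 in
/-- Boundedness and convergence of C¹ solutions of the Riccati-type equation
a·g' + b·g + g²/2 = H near x = -1. -/
theorem stmt11 (δ : ℝ) (hδ : 0 < δ) (a b H g g' : ℝ → ℝ)
    (ha : ContinuousOn a (Ioc (-1 : ℝ) (-1 + δ)))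
    (hb : ContinuousOn b (Ioc (-1 : ℝ) (-1 + δ)))
    (hH : ContinuousOn H (Ioc (-1 : ℝ) (-1 + δ)))
    (hbBdd : ∃ M : ℝ, ∀ x ∈ Ioo (-1 : ℝ) (-1 + δ), |b x| ≤ M)
    (hHpBdd : ∃ M : ℝ, ∀ x ∈ Ioo (-1 : ℝ) (-1 + δ), max (H x) 0 ≤ M)
    (haSign :
      ((∀ x ∈ Ioc (-1 : ℝ) (-1 + δ), 0 < a x) ∧
        Tendsto (fun x => ∫ s in x..(-1 + δ), 1 / a s) (𝓝[>] (-1)) atTop) ∨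
      ((∀ x ∈ Ioc (-1 : ℝ) (-1 + δ), a x < 0) ∧
        Tendsto (fun x => ∫ s in x..(-1 + δ), 1 / a s) (𝓝[>] (-1)) atBot))
    (hg : ∀ x ∈ Ioc (-1 : ℝ) (-1 + δ),
      HasDerivWithinAt g (g' x) (Ioc (-1 : ℝ) (-1 + δ)) x)
    (hg' : ContinuousOn g' (Ioc (-1 : ℝ) (-1 + δ)))
    (heq : ∀ x ∈ Ioo (-1 : ℝ) (-1 + δ),
      a x * g' x + b x * g x + (1 / 2) * (g x) ^ 2 = H x) :
    (∃ M : ℝ, ∀ x ∈ Ioo (-1 : ℝ) (-1 + δ), |g x| ≤ M) ∧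
    (((∃ LH : ℝ, Tendsto H (𝓝[>] (-1)) (𝓝 LH)) ∨
        Tendsto H (𝓝[>] (-1)) atTop ∨ Tendsto H (𝓝[>] (-1)) atBot) →
      (∃ Lb : ℝ, Tendsto b (𝓝[>] (-1)) (𝓝 Lb)) →
      (∃ L : ℝ, Tendsto g (𝓝[>] (-1)) (𝓝 L)) ∧
        Tendsto (fun x => a x * g' x) (𝓝[>] (-1)) (𝓝 0)) := by
  obtain ⟨Mb, hMb⟩ := hbBdd
  obtain ⟨MH, hMH⟩ := hHpBdd
  have hIooIoc : Ioo (-1:ℝ) (-1+δ) ⊆ Ioc (-1) (-1+δ) := Ioo_subset_Ioc_self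
  set M : ℝ := max (max Mb MH) 1 with hMdef
  have hM1 : (1:ℝ) ≤ M := le_max_right _ _
  have hMb' : ∀ z ∈ Ioo (-1:ℝ) (-1+δ), |b z| ≤ M := fun z hz =>
    le_trans (hMb z hz) (le_trans (le_max_left _ _) (le_max_left _ _))
  have hMH' : ∀ z ∈ Ioo (-1:ℝ) (-1+δ), H z ≤ M := fun z hz =>
    le_trans (le_max_left _ _) (le_trans (hMH z hz) (le_trans (le_max_right Mb MH) (le_max_left _ _)))
  have ha0 : ∀ z ∈ Ioc (-1:ℝ) (-1+δ), a z ≠ 0 := by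
    rcases haSign with ⟨h,_⟩|⟨h,_⟩
    · exact fun z hz => ne_of_gt (h z hz)
    · exact fun z hz => ne_of_lt (h z hz)
  have hgd : ∀ z ∈ Ioo (-1:ℝ) (-1+δ), HasDerivAt g (g' z) z := fun z hz =>
    (hg z (hIooIoc hz)).hasDerivAt (mem_of_superset (Ioo_mem_nhds hz.1 hz.2) hIooIoc)
  have hgc : ContinuousOn g (Ioc (-1:ℝ) (-1+δ)) := fun z hz => (hg z hz).continuousWithinAt
  have heqn : ∀ z ∈ Ioo (-1:ℝ) (-1+δ), a z * g' z = H z - b z * g z - (g z)^2/2 := by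
    intro z hz; have := heq z hz; linarith
  have hkey : ∀ z ∈ Ioo (-1:ℝ) (-1+δ), 4*M+4 ≤ |g z| → a z * g' z ≤ -((g z)^2/4) := by
    intro z hz hC
    have h1 := hMH' z hz
    have h2 := hMb' z hz
    have h3 := heqn z hz
    have h4 : -(b z * g z) ≤ M * |g z| := by
      calc -(b z * g z) ≤ |b z * g z| := neg_le_abs _
      _ = |b z| * |g z| := abs_mul _ _
      _ ≤ M * |g z| := mul_le_mul_of_nonneg_right h2 (abs_nonneg _)
    have h5 : (g z)^2 = |g z|^2 := (sq_abs _).symm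
    nlinarith [mul_le_mul_of_nonneg_right hC (abs_nonneg (g z)), abs_nonneg (g z)]
  have hCpos : (0:ℝ) < 4*M+4 := by linarith
  set x1 : ℝ := -1 + δ/2 with hx1def
  have hx1 : x1 ∈ Ioo (-1:ℝ) (-1+δ) := ⟨by rw [hx1def]; linarith, by rw [hx1def]; linarith⟩
  -- upper bound to the left of x1
  have hUp : ∀ z ∈ Ioo (-1:ℝ) x1, g z ≤ max (4*M+4) (g x1 + 2) := by
    intro z hz
    by_contra hcon
    push_neg at hcon
    have hzIoo : z ∈ Ioo (-1:ℝ) (-1+δ) := ⟨hz.1, hz.2.trans hx1.2⟩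
    have hgzC : 4*M+4 < g z := lt_of_le_of_lt (le_max_left _ (g x1 + 2)) hcon
    rcases haSign with ⟨hapos, hJ⟩ | ⟨haneg, hJ⟩
    · -- a > 0 : invariance to the left, then blow-up of 1/g
      have hinv : ∀ w ∈ Ioc (-1:ℝ) z, g z ≤ g w := by
        intro w hw
        by_contra hgw
        push_neg at hgw
        have hwz : w < z := by
          rcases lt_or_eq_of_le hw.2 with h|h
          · exact h
          · exact absurd (h ▸ hgw) (lt_irrefl _)
        have hmaxlt : max (4*M+4) (g w) < g z := max_lt hgzC hgw
        have hy1 : g w < (max (4*M+4) (g w) + g z)/2 := by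
          have := le_max_right (4*M+4) (g w); linarith
        have hy2 : (max (4*M+4) (g w) + g z)/2 < g z := by linarith
        have hyC : 4*M+4 < (max (4*M+4) (g w) + g z)/2 := by
          have := le_max_left (4*M+4) (g w); linarith
        obtain ⟨s, hsmem, hgs, hds⟩ := crossX g g' w z ((max (4*M+4) (g w) + g z)/2) hwz
          (fun p hp => hgd p ⟨lt_of_lt_of_le hw.1 hp.1, lt_of_le_of_lt hp.2 hzIoo.2⟩) hy1 hy2
        have hsIoo : s ∈ Ioo (-1:ℝ) (-1+δ) := ⟨hw.1.trans hsmem.1, lt_of_le_of_lt hsmem.2 hzIoo.2⟩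
        have hk := hkey s hsIoo (by rw [hgs, abs_of_pos (by linarith)]; linarith)
        have hA := hapos s (hIooIoc hsIoo)
        rw [hgs] at hk
        nlinarith [mul_nonneg hA.le hds, hk, hyC, hM1]
      have hgw : ∀ w ∈ Ioc (-1:ℝ) z, 4*M+4 < g w := fun w hw => lt_of_lt_of_le hgzC (hinv w hw)
      have hIoczdom : Ioc (-1:ℝ) z ⊆ Ioo (-1:ℝ) (-1+δ) := fun w hw => ⟨hw.1, lt_of_le_of_lt hw.2 hzIoo.2⟩
      have hIocz : Ioc (-1:ℝ) z ⊆ Ioc (-1:ℝ) (-1+δ) := fun w hw => hIooIoc (hIoczdom hw)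
      simp only [one_div] at hJ
      apply helperZ z (1/4) ((4*M+4)⁻¹) a (fun w => (g w)⁻¹) (fun w => -g' w/(g w)^2)
        (hJhelp δ z (1/4) a hzIoo ha ha0 (hJ.const_mul_atTop (by norm_num)))
        hz.1 ?_ ?_ ?_ ?_ ?_
      · intro p hp hp'
        have hpmem : p ∈ Ioc (-1:ℝ) z := ⟨lt_of_le_of_ne hp.1 (Ne.symm hp'), hp.2⟩
        exact (hgd p (hIoczdom hpmem)).inv (by linarith [hgw p hpmem])
      · exact ((hg'.mono hIocz).neg.div ((hgc.mono hIocz).pow 2)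
          (fun w hw => pow_ne_zero 2 (by linarith [hgw w hw])))
      · exact continuousOn_const.mul ((ha.mono hIocz).inv₀ (fun w hw => ha0 w (hIocz hw)))
      · intro p hp
        have hA := hapos p (hIocz hp)
        have hgp := hgw p hp
        have hk := hkey p (hIoczdom hp) (by rw [abs_of_pos (by linarith)]; linarith)
        have hg2 : (0:ℝ) < (g p)^2 := pow_pos (by linarith) 2
        show (1:ℝ)/4 * (a p)⁻¹ ≤ -g' p/(g p)^2
        rw [le_div_iff₀ hg2]
        have hl := lemA (a p) (-g' p) ((g p)^2/4) hA (by nlinarith [hk])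
        nlinarith [hl]
      · intro p hp
        have hgp := hgw p hp
        rw [abs_of_pos (inv_pos.2 (by linarith))]
        exact inv_anti₀ hCpos (by linarith)
    · -- a < 0 : crossing toward x1
      have hy1 : max (4*M+4) (g z - 1) < g z := max_lt hgzC (by linarith)
      have hy2 : g x1 < max (4*M+4) (g z - 1) := by
        have h2 : g x1 + 2 ≤ max (4*M+4) (g x1+2) := le_max_right _ _
        have h3 : g z - 1 ≤ max (4*M+4) (g z - 1) := le_max_right _ _
        linarith
      have hyC : 4*M+4 ≤ max (4*M+4) (g z - 1) := le_max_left _ _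
      obtain ⟨s, hsmem, hgs, hds⟩ := crossY g g' z x1 (max (4*M+4) (g z - 1)) hz.2
        (fun p hp => hgd p ⟨lt_of_lt_of_le hz.1 hp.1, lt_of_le_of_lt hp.2 hx1.2⟩) hy1 hy2
      have hsIoo : s ∈ Ioo (-1:ℝ) (-1+δ) := ⟨hz.1.trans hsmem.1, lt_of_le_of_lt hsmem.2 hx1.2⟩
      have hk := hkey s hsIoo (by rw [hgs, abs_of_pos (by linarith)]; linarith)
      have hA := haneg s (hIooIoc hsIoo)
      rw [hgs] at hk
      nlinarith [mul_nonneg (neg_nonneg.2 hA.le) (neg_nonneg.2 hds), hk, hyC, hM1]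
  -- lower bound to the left of x1
  have hLo : ∀ z ∈ Ioo (-1:ℝ) x1, -(max (4*M+4) (2 - g x1)) ≤ g z := by
    intro z hz
    by_contra hcon
    push_neg at hcon
    have hzIoo : z ∈ Ioo (-1:ℝ) (-1+δ) := ⟨hz.1, hz.2.trans hx1.2⟩
    have hgzC : g z < -(4*M+4) := lt_of_lt_of_le hcon (neg_le_neg (le_max_left _ _))
    rcases haSign with ⟨hapos, hJ⟩ | ⟨haneg, hJ⟩
    · -- a > 0 : crossing toward x1
      have hy1 : g z < min (-(4*M+4)) (g z + 1) := lt_min hgzC (by linarith)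
      have hy2 : min (-(4*M+4)) (g z + 1) < g x1 := by
        have h3 : min (-(4*M+4)) (g z + 1) ≤ g z + 1 := min_le_right _ _
        have h4 : -(max (4*M+4) (2-g x1)) ≤ -(2 - g x1) := neg_le_neg (le_max_right _ _)
        linarith
      have hyC : min (-(4*M+4)) (g z + 1) ≤ -(4*M+4) := min_le_left _ _
      obtain ⟨s, hsmem, hgs, hds⟩ := crossX g g' z x1 (min (-(4*M+4)) (g z + 1)) hz.2
        (fun p hp => hgd p ⟨lt_of_lt_of_le hz.1 hp.1, lt_of_le_of_lt hp.2 hx1.2⟩) hy1 hy2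
      have hsIoo : s ∈ Ioo (-1:ℝ) (-1+δ) := ⟨hz.1.trans hsmem.1, lt_of_le_of_lt hsmem.2 hx1.2⟩
      have hk := hkey s hsIoo (by rw [hgs, abs_of_neg (by linarith)]; linarith)
      have hA := hapos s (hIooIoc hsIoo)
      rw [hgs] at hk
      nlinarith [mul_nonneg hA.le hds, hk, hyC, hM1]
    · -- a < 0 : invariance to the left, then blow-up of -1/g
      have hinv : ∀ w ∈ Ioc (-1:ℝ) z, g w ≤ g z := by
        intro w hw
        by_contra hgw
        push_neg at hgw
        have hwz : w < z := by
          rcases lt_or_eq_of_le hw.2 with h|h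
          · exact h
          · exact absurd (h ▸ hgw) (lt_irrefl _)
        have hminlt : g z < min (-(4*M+4)) (g w) := lt_min hgzC hgw
        have hy1 : g z < (g z + min (-(4*M+4)) (g w))/2 := by linarith
        have hy2 : (g z + min (-(4*M+4)) (g w))/2 < g w := by
          have := min_le_right (-(4*M+4)) (g w); linarith
        have hyC : (g z + min (-(4*M+4)) (g w))/2 < -(4*M+4) := by
          have := min_le_left (-(4*M+4)) (g w); linarith
        obtain ⟨s, hsmem, hgs, hds⟩ := crossY g g' w z ((g z + min (-(4*M+4)) (g w))/2) hwz
          (fun p hp => hgd p ⟨lt_of_lt_of_le hw.1 hp.1, lt_of_le_of_lt hp.2 hzIoo.2⟩) hy2 hy1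
        have hsIoo : s ∈ Ioo (-1:ℝ) (-1+δ) := ⟨hw.1.trans hsmem.1, lt_of_le_of_lt hsmem.2 hzIoo.2⟩
        have hk := hkey s hsIoo (by rw [hgs, abs_of_neg (by linarith)]; linarith)
        have hA := haneg s (hIooIoc hsIoo)
        rw [hgs] at hk
        nlinarith [mul_nonneg (neg_nonneg.2 hA.le) (neg_nonneg.2 hds), hk, hyC, hM1]
      have hgw : ∀ w ∈ Ioc (-1:ℝ) z, g w < -(4*M+4) := fun w hw => lt_of_le_of_lt (hinv w hw) hgzC
      have hIoczdom : Ioc (-1:ℝ) z ⊆ Ioo (-1:ℝ) (-1+δ) := fun w hw => ⟨hw.1, lt_of_le_of_lt hw.2 hzIoo.2⟩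
      have hIocz : Ioc (-1:ℝ) z ⊆ Ioc (-1:ℝ) (-1+δ) := fun w hw => hIooIoc (hIoczdom hw)
      simp only [one_div] at hJ
      have hJneg : Tendsto (fun x => (-(1:ℝ)/4) * ∫ s in x..(-1+δ), (a s)⁻¹) (𝓝[>] (-1)) atTop := by
        have h0 := (tendsto_neg_atBot_atTop.comp hJ).const_mul_atTop (show (0:ℝ) < 1/4 by norm_num)
        exact h0.congr (fun x => by simp only [Function.comp_apply]; ring)
      apply helperZ z (-(1:ℝ)/4) ((4*M+4)⁻¹) a (fun w => -(g w)⁻¹) (fun w => -(-g' w/(g w)^2))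
        (hJhelp δ z (-(1:ℝ)/4) a hzIoo ha ha0 hJneg) hz.1 ?_ ?_ ?_ ?_ ?_
      · intro p hp hp'
        have hpmem : p ∈ Ioc (-1:ℝ) z := ⟨lt_of_le_of_ne hp.1 (Ne.symm hp'), hp.2⟩
        exact ((hgd p (hIoczdom hpmem)).inv (by linarith [hgw p hpmem])).neg
      · exact ((hg'.mono hIocz).neg.div ((hgc.mono hIocz).pow 2)
          (fun w hw => pow_ne_zero 2 (by linarith [hgw w hw]))).neg
      · exact continuousOn_const.mul ((ha.mono hIocz).inv₀ (fun w hw => ha0 w (hIocz hw)))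
      · intro p hp
        have hA := haneg p (hIocz hp)
        have hgp := hgw p hp
        have hk := hkey p (hIoczdom hp) (by rw [abs_of_neg (by linarith)]; linarith)
        have hg2 : (0:ℝ) < (g p)^2 := sq_pos_of_ne_zero (by linarith)
        show (-(1:ℝ)/4) * (a p)⁻¹ ≤ -(-g' p/(g p)^2)
        rw [show -(-g' p/(g p)^2) = g' p/(g p)^2 by ring, le_div_iff₀ hg2]
        have hl := lemB (a p) (g' p) (-((g p)^2)/4) hA (by linarith [hk])
        nlinarith [hl]
      · intro p hp
        have hgp := hgw p hp
        rw [abs_neg, abs_inv]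
        exact inv_anti₀ hCpos (by rw [abs_of_neg (by linarith)]; linarith)
  -- combine into global bound
  have hbdd : ∃ Mg : ℝ, ∀ x ∈ Ioo (-1:ℝ) (-1+δ), |g x| ≤ Mg := by
    obtain ⟨K, hK⟩ := isCompact_Icc.exists_bound_of_continuousOn
      (hgc.mono (fun w hw => ⟨lt_of_lt_of_le hx1.1 hw.1, hw.2⟩) : ContinuousOn g (Icc x1 (-1+δ)))
    refine ⟨max K (max (max (4*M+4) (g x1 + 2)) (max (4*M+4) (2 - g x1))), ?_⟩
    intro x hx
    rcases lt_or_ge x x1 with h|h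
    · have h1 := hUp x ⟨hx.1, h⟩
      have h2 := hLo x ⟨hx.1, h⟩
      rw [abs_le]
      constructor
      · have h3 : max (4*M+4) (2 - g x1) ≤ max K (max (max (4*M+4) (g x1 + 2)) (max (4*M+4) (2 - g x1))) :=
          le_trans (le_max_right _ _) (le_max_right _ _)
        linarith
      · exact le_trans h1 (le_trans (le_max_left _ _) (le_max_right _ _))
    · have h4 := hK x ⟨h, hx.2.le⟩
      rw [Real.norm_eq_abs] at h4
      exact le_trans h4 (le_max_left _ _)
  refine ⟨hbdd, ?_⟩
  intro hHlim hblim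
  obtain ⟨Mg, hMg⟩ := hbdd
  obtain ⟨Lb, hLbt⟩ := hblim
  have hIooMem : Ioo (-1:ℝ) (-1+δ) ∈ 𝓝[>] (-1:ℝ) := Ioo_mem_nhdsGT_of_mem ⟨le_rfl, by linarith⟩
  have hevIoo : ∀ᶠ x in 𝓝[>] (-1:ℝ), x ∈ Ioo (-1:ℝ) (-1+δ) := Filter.eventually_mem_set.2 hIooMem
  rcases hHlim with ⟨LH, hLH⟩ | hT | hB'
  · -- finite limit case
    have hbddAbove : IsBoundedUnder (· ≤ ·) (𝓝[>] (-1:ℝ)) g :=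
      isBoundedUnder_of_eventually_le (a := Mg)
        (by filter_upwards [hevIoo] with x hx using (abs_le.1 (hMg x hx)).2)
    have hbddBelow : IsBoundedUnder (· ≥ ·) (𝓝[>] (-1:ℝ)) g :=
      isBoundedUnder_of_eventually_ge (a := -Mg)
        (by filter_upwards [hevIoo] with x hx using (abs_le.1 (hMg x hx)).1)
    have hle : liminf g (𝓝[>] (-1:ℝ)) ≤ limsup g (𝓝[>] (-1:ℝ)) := liminf_le_limsup hbddAbove hbddBelow
    have heqlim : liminf g (𝓝[>] (-1:ℝ)) = limsup g (𝓝[>] (-1:ℝ)) := by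
      by_contra hne
      set lam := liminf g (𝓝[>] (-1:ℝ)) with hlamdef
      set Lam := limsup g (𝓝[>] (-1:ℝ)) with hLamdef
      clear_value lam Lam
      have hlt : lam < Lam := lt_of_le_of_ne hle hne
      have hyex : ∃ y : ℝ, lam < y ∧ y < Lam ∧ y^2/2 + Lb*y - LH ≠ 0 := by
        by_contra hc
        push_neg at hc
        have e1 := hc (lam + (Lam-lam)/4) (by linarith) (by linarith)
        have e2 := hc (lam + (Lam-lam)/2) (by linarith) (by linarith)
        have e3 := hc (lam + 3*(Lam-lam)/4) (by linarith) (by linarith)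
        have hzero : (Lam - lam)^2/16 = 0 := by linear_combination e1 - 2*e2 + e3
        nlinarith [sq_nonneg (Lam - lam)]
      obtain ⟨y, hy1, hy2, hyroot⟩ := hyex
      have hψt : Tendsto (fun z => (H z - b z * y - y^2/2) * (y^2/2 + Lb*y - LH)) (𝓝[>] (-1:ℝ))
          (𝓝 (-((y^2/2 + Lb*y - LH)^2))) := by
        have h1 : Tendsto (fun z => H z - b z * y - y^2/2) (𝓝[>] (-1:ℝ)) (𝓝 (LH - Lb*y - y^2/2)) :=
          (hLH.sub (hLbt.mul_const y)).sub tendsto_const_nhds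
        have h2 := h1.mul_const (y^2/2 + Lb*y - LH)
        convert h2 using 2
        ring
      have hsq : (0:ℝ) < (y^2/2 + Lb*y - LH)^2 := sq_pos_of_ne_zero hyroot
      have hevneg : ∀ᶠ z in 𝓝[>] (-1:ℝ), (H z - b z*y - y^2/2) * (y^2/2 + Lb*y - LH) < 0 :=
        hψt.eventually_lt_const (by linarith)
      obtain ⟨u, hu, husub⟩ := mem_nhdsGT_iff_exists_Ioo_subset.1
        (Filter.eventually_iff.1 (hevneg.and hevIoo))
      have hfreq_hi : ∃ᶠ z in 𝓝[>] (-1:ℝ), y < g z :=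
        frequently_lt_of_lt_limsup hbddBelow.isCoboundedUnder_flip (hLamdef ▸ hy2)
      have hfreq_lo : ∃ᶠ z in 𝓝[>] (-1:ℝ), g z < y :=
        frequently_lt_of_liminf_lt hbddAbove.isCoboundedUnder_flip (hlamdef ▸ hy1)
      -- crossing of type X : g' ≥ 0
      obtain ⟨p1, hgp1, hp1⟩ := (hfreq_hi.and_eventually (Filter.eventually_mem_set.2
        (Ioo_mem_nhdsGT_of_mem ⟨le_rfl, hu⟩))).exists
      obtain ⟨p2, hgp2, hp2⟩ := (hfreq_lo.and_eventually (Filter.eventually_mem_set.2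
        (Ioo_mem_nhdsGT_of_mem ⟨le_rfl, hp1.1⟩))).exists
      have hIccsub : Icc p2 p1 ⊆ Ioo (-1:ℝ) (-1+δ) := by
        intro w hw
        exact (husub ⟨lt_of_lt_of_le hp2.1 hw.1, lt_of_le_of_lt hw.2 hp1.2⟩).2
      obtain ⟨s, hsmem, hgs, hds⟩ := crossX g g' p2 p1 y hp2.2
        (fun p hp => hgd p (hIccsub hp)) hgp2 hgp1
      have hsE := husub ⟨hp2.1.trans hsmem.1, lt_of_le_of_lt hsmem.2 hp1.2⟩
      -- crossing of type Y : g' ≤ 0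
      obtain ⟨q1, hgq1, hq1⟩ := (hfreq_lo.and_eventually (Filter.eventually_mem_set.2
        (Ioo_mem_nhdsGT_of_mem ⟨le_rfl, hu⟩))).exists
      obtain ⟨q2, hgq2, hq2⟩ := (hfreq_hi.and_eventually (Filter.eventually_mem_set.2
        (Ioo_mem_nhdsGT_of_mem ⟨le_rfl, hq1.1⟩))).exists
      have hIccsub' : Icc q2 q1 ⊆ Ioo (-1:ℝ) (-1+δ) := by
        intro w hw
        exact (husub ⟨lt_of_lt_of_le hq2.1 hw.1, lt_of_le_of_lt hw.2 hq1.2⟩).2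
      obtain ⟨t, htmem, hgt, hdt⟩ := crossY g g' q2 q1 y hq2.2
        (fun p hp => hgd p (hIccsub' hp)) hgq2 hgq1
      have htE := husub ⟨hq2.1.trans htmem.1, lt_of_le_of_lt htmem.2 hq1.2⟩
      have heqs : a s * g' s = H s - b s * y - y^2/2 := by
        have h0 := heqn s hsE.2; rw [hgs] at h0; exact h0
      have heqt : a t * g' t = H t - b t * y - y^2/2 := by
        have h0 := heqn t htE.2; rw [hgt] at h0; exact h0
      have hψs := hsE.1
      have hψt2 := htE.1
      have hψψ : 0 < (H s - b s*y - y^2/2) * (H t - b t*y - y^2/2) := by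
        nlinarith [mul_pos_of_neg_of_neg hψs hψt2, hsq]
      have haa : 0 < a s * a t := by
        rcases haSign with ⟨hp,_⟩|⟨hn,_⟩
        · exact mul_pos (hp s (hIooIoc hsE.2)) (hp t (hIooIoc htE.2))
        · exact mul_pos_of_neg_of_neg (hn s (hIooIoc hsE.2)) (hn t (hIooIoc htE.2))
      have heprod : (a s * g' s) * (a t * g' t) = (H s - b s*y - y^2/2) * (H t - b t*y - y^2/2) := by
        rw [heqs, heqt]
      nlinarith [mul_nonpos_of_nonneg_of_nonpos hds hdt, hψψ, haa, heprod]
    have hgL : Tendsto g (𝓝[>] (-1:ℝ)) (𝓝 (limsup g (𝓝[>] (-1:ℝ)))) :=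
      tendsto_of_liminf_eq_limsup heqlim rfl hbddAbove hbddBelow
    set L := limsup g (𝓝[>] (-1:ℝ)) with hLdef
    clear_value L
    have hagt : Tendsto (fun x => a x * g' x) (𝓝[>] (-1:ℝ)) (𝓝 (LH - Lb*L - L^2/2)) := by
      have h1 : Tendsto (fun x => H x - b x*g x - (g x)^2/2) (𝓝[>] (-1:ℝ)) (𝓝 (LH - Lb*L - L^2/2)) :=
        (hLH.sub (hLbt.mul hgL)).sub ((hgL.pow 2).div_const 2)
      refine Tendsto.congr' ?_ h1
      filter_upwards [hevIoo] with x hx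
      exact (heqn x hx).symm
    have hκ : LH - Lb*L - L^2/2 = 0 := by
      by_contra hκ0
      refine lemW δ (LH - Lb*L - L^2/2) Mg a g g' hδ hκ0 ha ha0 haSign hgd hg' hMg ?_
      have h2 := hagt.mul_const (LH - Lb*L - L^2/2)
      exact h2.eventually (eventually_ge_nhds (by nlinarith [sq_pos_of_ne_zero hκ0]))
    exact ⟨⟨L, hgL⟩, hκ ▸ hagt⟩
  · -- H → +∞ : contradicts the bound on H⁺
    exfalso
    obtain ⟨x, hx1, hx2⟩ := ((hT.eventually_ge_atTop (M+1)).and hevIoo).exists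
    have := hMH' x hx2
    linarith
  · -- H → -∞ : integral blow-up contradiction
    exfalso
    have hev : ∀ᶠ x in 𝓝[>] (-1:ℝ), ((-1:ℝ))^2/2 ≤ a x * g' x * (-1) := by
      filter_upwards [hB'.eventually_le_atBot (-(M*Mg + Mg^2/2 + 1)), hevIoo] with x hx1 hx2
      have h1 := heqn x hx2
      have h2 := hMb' x hx2
      have h3 := abs_le.1 (hMg x hx2)
      have h4 : -(b x * g x) ≤ M * Mg := by
        calc -(b x * g x) ≤ |b x * g x| := neg_le_abs _
        _ = |b x| * |g x| := abs_mul _ _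
        _ ≤ M * Mg := mul_le_mul h2 (hMg x hx2) (abs_nonneg _) (by linarith)
      have h5 : (g x)^2 ≤ Mg^2 := by nlinarith [h3.1, h3.2]
      nlinarith [h1, hx1]
    exact lemW δ (-1) Mg a g g' hδ (by norm_num) ha ha0 haSign hgd hg' hMg hev
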